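/- Let L ∈ 𝐋 and let V, W ∈ 𝐕(L) with V ≠ 0 and W ≠ 0. Then the limit as u ↓ 0 of ( u²‖V‖_F² + u²‖W‖_F² − d_ABW(L+uV, L+uW)² ) / ( 2u²·‖V‖_F·‖W‖_F ) exists and equals sup_{O ∈ 𝐎*(L,L)} ⟨V, WO⟩_F / ( ‖V‖_F·‖W‖_F ). (This identifies the cosine of the Alexandrov angle between the geodesics u ↦ [L+uV] and u ↦ [L+uW] emanating from [L].) -/

import Mathlib

open Matrix Filter Topology

/-- Square matrices of size `dT × dT`, indexed by blocks: index `(t, i)` is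
row/column `i` within block `t`. -/
abbrev Mat (d T : ℕ) := Matrix (Fin T × Fin d) (Fin T × Fin d) ℝ

/-- The `t`-th diagonal `d × d` block of a `dT × dT` matrix. -/
def blk {d T : ℕ} (A : Mat d T) (t : Fin T) : Matrix (Fin d) (Fin d) ℝ :=
  fun i j => A (t, i) (t, j)

/-- The `t`-th block column of a `dT × dT` matrix, a `dT × d` matrix. -/
def colBlk {d T : ℕ} (A : Mat d T) (t : Fin T) : Matrix (Fin T × Fin d) (Fin d) ℝ :=
  fun p j => A p (t, j)

/-- Membership in `𝐋`: block lower triangular matrices. -/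
def memL {d T : ℕ} (A : Mat d T) : Prop :=
  ∀ (t s : Fin T) (i j : Fin d), t < s → A (t, i) (s, j) = 0

/-- Membership in `𝐎`: block diagonal matrices with orthogonal `d × d` diagonal blocks
(equivalently: block diagonal and orthogonal). -/
def memO {d T : ℕ} (O : Mat d T) : Prop :=
  (∀ (t s : Fin T) (i j : Fin d), t ≠ s → O (t, i) (s, j) = 0) ∧ Oᵀ * O = 1

/-- The Frobenius norm of a real matrix. -/
noncomputable def frobNorm {m n : Type*} [Fintype m] [Fintype n] (A : Matrix m n ℝ) : ℝ :=
  Real.sqrt (∑ i, ∑ j, (A i j) ^ 2)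

/-- The Frobenius inner product of two real matrices. -/
noncomputable def frobInner {m n : Type*} [Fintype m] [Fintype n] (A B : Matrix m n ℝ) : ℝ :=
  ∑ i, ∑ j, A i j * B i j

/-- The adapted Bures–Wasserstein distance `d_ABW(L, M) = inf_{O ∈ 𝐎} ‖L - M O‖_F`. -/
noncomputable def dABW {d T : ℕ} (L M : Mat d T) : ℝ :=
  sInf {r : ℝ | ∃ O : Mat d T, memO O ∧ r = frobNorm (L - M * O)}

/-- The set `𝐎*(L, M)` of optimizers of `inf_{O ∈ 𝐎} ‖L - M O‖_F`. -/
noncomputable def OStar {d T : ℕ} (L M : Mat d T) : Set (Mat d T) :=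
  {O | memO O ∧ frobNorm (L - M * O) = dABW L M}

/-- The set `𝐕(L) = {M P - L : M ∈ 𝐋, P ∈ 𝐎*(L, M)}`. -/
noncomputable def VSet {d T : ℕ} (L : Mat d T) : Set (Mat d T) :=
  {V | ∃ M P : Mat d T, memL M ∧ P ∈ OStar L M ∧ V = M * P - L}

/-- The set `𝒱(L) = {V ∈ 𝐋 : (Vᵀ L)_{t,t} is symmetric for all t}`. -/
def calV {d T : ℕ} (L : Mat d T) : Set (Mat d T) :=
  {V | memL V ∧ ∀ t : Fin T, (blk (Vᵀ * L) t).IsSymm}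

/-- The set `𝐋^reg = {L ∈ 𝐋 : (Lᵀ L)_{t,t} is positive definite for all t}`. -/
def LReg {d T : ℕ} : Set (Mat d T) :=
  {L | memL L ∧ ∀ t : Fin T, (blk (Lᵀ * L) t).PosDef}

/-- The sum of the singular values of a real square matrix `A`,
i.e. the trace of the positive semidefinite square root of `Aᵀ A`. -/
noncomputable def svSum {n : ℕ} (A : Matrix (Fin n) (Fin n) ℝ) : ℝ :=
  ((Matrix.posSemidef_conjTranspose_mul_self A).isHermitian.eigenvectorUnitary.1 *
    diagonal (Real.sqrt ∘ (Matrix.posSemidef_conjTranspose_mul_self A).isHermitian.eigenvalues) *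
    (star (Matrix.posSemidef_conjTranspose_mul_self A).isHermitian.eigenvectorUnitary :
      Matrix (Fin n) (Fin n) ℝ)).trace

/-- The operator norm of a real matrix: the supremum of the euclidean norm `‖A x‖₂`
over the euclidean unit ball. -/
noncomputable def opNorm {m n : Type*} [Fintype m] [Fintype n] (A : Matrix m n ℝ) : ℝ :=
  sSup {r : ℝ | ∃ x : n → ℝ, (∑ j, (x j) ^ 2) ≤ 1 ∧ r = Real.sqrt (∑ i, (A.mulVec x i) ^ 2)}

section Aux
variable {d T : ℕ}

lemma frobInner_comm {m n : Type*} [Fintype m] [Fintype n] (A B : Matrix m n ℝ) :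
    frobInner A B = frobInner B A := by simp [frobInner, mul_comm]

lemma frobInner_eq_trace (A B : Mat d T) : frobInner A B = (Aᵀ * B).trace := by
  simp only [frobInner, Matrix.trace, Matrix.diag, Matrix.mul_apply, Matrix.transpose_apply]
  exact Finset.sum_comm

lemma frobInner_add_left (A B C : Mat d T) :
    frobInner (A + B) C = frobInner A C + frobInner B C := by
  simp [frobInner, add_mul, Finset.sum_add_distrib]

lemma frobInner_sub_left (A B C : Mat d T) :
    frobInner (A - B) C = frobInner A C - frobInner B C := by
  simp [frobInner, sub_mul, Finset.sum_sub_distrib]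

lemma frobInner_smul_left (r : ℝ) (A C : Mat d T) :
    frobInner (r • A) C = r * frobInner A C := by
  simp [frobInner, Finset.mul_sum, mul_assoc]

lemma frobInner_add_right (A B C : Mat d T) :
    frobInner C (A + B) = frobInner C A + frobInner C B := by
  rw [frobInner_comm, frobInner_add_left, frobInner_comm A C, frobInner_comm B C]

lemma frobInner_sub_right (A B C : Mat d T) :
    frobInner C (A - B) = frobInner C A - frobInner C B := by
  rw [frobInner_comm, frobInner_sub_left, frobInner_comm A C, frobInner_comm B C]

lemma frobInner_smul_right (r : ℝ) (A C : Mat d T) :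
    frobInner C (r • A) = r * frobInner C A := by
  rw [frobInner_comm, frobInner_smul_left, frobInner_comm A C]

lemma frobInner_self_nonneg (A : Mat d T) : 0 ≤ frobInner A A :=
  Finset.sum_nonneg fun _ _ => Finset.sum_nonneg fun _ _ => mul_self_nonneg _

lemma frobInner_self_eq_zero {A : Mat d T} (h : frobInner A A = 0) : A = 0 := by
  have h1 := (Finset.sum_eq_zero_iff_of_nonneg
    (fun i _ => Finset.sum_nonneg fun j _ => mul_self_nonneg (A i j))).mp h
  ext i j
  have h2 := (Finset.sum_eq_zero_iff_of_nonneg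
    (fun j _ => mul_self_nonneg (A i j))).mp (h1 i (Finset.mem_univ i)) j (Finset.mem_univ j)
  exact mul_self_eq_zero.mp h2

lemma frobNorm_sq (A : Mat d T) : frobNorm A ^ 2 = frobInner A A := by
  rw [frobNorm, Real.sq_sqrt (by positivity)]
  simp [frobInner, sq]

lemma frobNorm_nonneg (A : Mat d T) : 0 ≤ frobNorm A := Real.sqrt_nonneg _

lemma frobNorm_eq_zero {A : Mat d T} (h : frobNorm A = 0) : A = 0 := by
  apply frobInner_self_eq_zero
  rw [← frobNorm_sq, h]; ring

lemma frobInner_mul_swap (A B Q : Mat d T) :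
    frobInner A (B * Q) = frobInner B (A * Qᵀ) := by
  rw [frobInner_eq_trace, frobInner_eq_trace]
  have : Bᵀ * (A * Qᵀ) = (Q * (Aᵀ * B))ᵀ := by
    simp [Matrix.transpose_mul, Matrix.mul_assoc]
  rw [this, Matrix.trace_transpose, Matrix.trace_mul_comm, Matrix.mul_assoc]
  rw [Matrix.trace_mul_comm, Matrix.mul_assoc]

lemma frobInner_mul_orth {B Q : Mat d T} (hQ : Qᵀ * Q = 1) :
    frobInner (B * Q) (B * Q) = frobInner B B := by
  rw [frobInner_eq_trace, frobInner_eq_trace]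
  have h1 : Q * Qᵀ = 1 := mul_eq_one_comm.mp hQ
  calc ((B * Q)ᵀ * (B * Q)).trace = (Qᵀ * ((Bᵀ * B) * Q)).trace := by
        simp [Matrix.transpose_mul, Matrix.mul_assoc]
    _ = (((Bᵀ * B) * Q) * Qᵀ).trace := Matrix.trace_mul_comm _ _
    _ = (Bᵀ * B).trace := by rw [Matrix.mul_assoc, h1, Matrix.mul_one]

end Aux

section Aux2
variable {d T : ℕ}

lemma memO_one : memO (1 : Mat d T) := by
  constructor
  · intro t s i j hts
    apply Matrix.one_apply_ne
    intro h
    exact hts (congrArg Prod.fst h)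
  · simp

lemma memO_mul {P Q : Mat d T} (hP : memO P) (hQ : memO Q) : memO (P * Q) := by
  constructor
  · intro t s i j hts
    rw [Matrix.mul_apply]
    apply Finset.sum_eq_zero
    rintro ⟨r, k⟩ -
    by_cases hrt : r = t
    · subst hrt
      rw [hQ.1 r s k j hts, mul_zero]
    · rw [hP.1 t r i k (fun h => hrt h.symm), zero_mul]
  · rw [Matrix.transpose_mul, Matrix.mul_assoc, ← Matrix.mul_assoc Pᵀ, hP.2,
      Matrix.one_mul, hQ.2]

lemma memO_transpose {Q : Mat d T} (hQ : memO Q) : memO Qᵀ := by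
  constructor
  · intro t s i j hts
    exact hQ.1 s t j i (fun h => hts h.symm)
  · rw [Matrix.transpose_transpose]
    exact mul_eq_one_comm.mp hQ.2

lemma dABW_le {L M O : Mat d T} (hO : memO O) : dABW L M ≤ frobNorm (L - M * O) :=
  csInf_le ⟨0, by rintro r ⟨Q, hQ, rfl⟩; exact frobNorm_nonneg _⟩ ⟨O, hO, rfl⟩

lemma dABW_nonneg (L M : Mat d T) : 0 ≤ dABW L M :=
  le_csInf ⟨_, ⟨1, memO_one, rfl⟩⟩ (by rintro r ⟨Q, hQ, rfl⟩; exact frobNorm_nonneg _)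

lemma dABW_self (L : Mat d T) : dABW L L = 0 := by
  refine le_antisymm ?_ (dABW_nonneg L L)
  have h := dABW_le (L := L) (M := L) memO_one
  simpa [frobNorm] using h

lemma mem_OStar_self {L O : Mat d T} : O ∈ OStar L L ↔ memO O ∧ L * O = L := by
  constructor
  · rintro ⟨h1, h2⟩
    refine ⟨h1, ?_⟩
    rw [dABW_self] at h2
    have := frobNorm_eq_zero h2
    have := sub_eq_zero.mp this
    exact this.symm
  · rintro ⟨h1, h2⟩
    refine ⟨h1, ?_⟩
    rw [dABW_self, h2]
    simp [frobNorm]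

end Aux2

section Aux3
variable {d T : ℕ}

lemma cont_entry (p q : Fin T × Fin d) : Continuous fun A : Mat d T => A p q :=
  (continuous_apply q).comp (continuous_apply p)

lemma cont_frobInner_right (V W : Mat d T) :
    Continuous fun O : Mat d T => frobInner V (W * O) := by
  unfold frobInner
  refine continuous_finset_sum _ fun i _ => continuous_finset_sum _ fun j _ => ?_
  exact continuous_const.mul ((continuous_const.matrix_mul continuous_id).matrix_elem i j)

lemma cont_hfun (L : Mat d T) :
    Continuous fun O : Mat d T => frobInner (L * O - L) (L * O - L) := by
  unfold frobInner
  refine continuous_finset_sum _ fun i _ => continuous_finset_sum _ fun j _ => ?_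
  have hc : Continuous fun O : Mat d T => (L * O - L) i j :=
    ((continuous_const.matrix_mul continuous_id).sub continuous_const).matrix_elem i j
  exact hc.mul hc

lemma cont_dist (A B : Mat d T) :
    Continuous fun O : Mat d T => frobNorm (A - B * O) := by
  unfold frobNorm
  apply Real.continuous_sqrt.comp
  refine continuous_finset_sum _ fun i _ => continuous_finset_sum _ fun j _ => ?_
  exact (((continuous_const.sub (continuous_const.matrix_mul continuous_id)).matrix_elem i j).pow 2)

lemma isClosed_setO : IsClosed {O : Mat d T | memO O} := by
  have h1 : IsClosed {O : Mat d T | ∀ (t s : Fin T) (i j : Fin d), t ≠ s → O (t, i) (s, j) = 0} := by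
    have : {O : Mat d T | ∀ (t s : Fin T) (i j : Fin d), t ≠ s → O (t, i) (s, j) = 0}
        = ⋂ (t : Fin T), ⋂ (s : Fin T), ⋂ (i : Fin d), ⋂ (j : Fin d),
          {O : Mat d T | t ≠ s → O (t, i) (s, j) = 0} := by
      ext O; simp
    rw [this]
    refine isClosed_iInter fun t => isClosed_iInter fun s => isClosed_iInter fun i =>
      isClosed_iInter fun j => ?_
    by_cases hts : t = s
    · convert isClosed_univ
      ext O; simp [hts]
    · have : {O : Mat d T | t ≠ s → O (t, i) (s, j) = 0}
          = {O : Mat d T | O (t, i) (s, j) = 0} := by ext O; simp [hts]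
      rw [this]
      exact isClosed_eq (cont_entry _ _) continuous_const
  have h2 : IsClosed {O : Mat d T | Oᵀ * O = 1} :=
    isClosed_eq (continuous_id.matrix_transpose.matrix_mul continuous_id) continuous_const
  exact h1.inter h2

lemma isCompact_setO : IsCompact {O : Mat d T | memO O} := by
  have hK : IsCompact {A : Mat d T | ∀ p q, A p q ∈ Set.Icc (-1 : ℝ) 1} := by
    have : {A : Mat d T | ∀ p q, A p q ∈ Set.Icc (-1 : ℝ) 1}
        = Set.pi Set.univ (fun _ : Fin T × Fin d =>
            Set.pi Set.univ (fun _ : Fin T × Fin d => Set.Icc (-1 : ℝ) 1)) := by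
      ext A
      simp only [Set.mem_setOf_eq, Set.mem_pi, Set.mem_univ, forall_true_left, true_implies]
      tauto
    rw [this]
    exact isCompact_univ_pi fun _ => isCompact_univ_pi fun _ => isCompact_Icc
  refine IsCompact.of_isClosed_subset hK isClosed_setO ?_
  rintro O ⟨-, hO⟩ p q
  have hdiag : (Oᵀ * O) q q = 1 := by rw [hO]; simp
  rw [Matrix.mul_apply] at hdiag
  simp only [Matrix.transpose_apply] at hdiag
  have hterm : O p q * O p q ≤ 1 := by
    rw [← hdiag]
    exact Finset.single_le_sum (f := fun r => O r q * O r q)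
      (fun r _ => mul_self_nonneg _) (Finset.mem_univ p)
  have habs : |O p q| ≤ 1 := by nlinarith [abs_nonneg (O p q), sq_abs (O p q), sq_nonneg (O p q)]
  exact abs_le.mp habs

end Aux3

section Aux4
variable {d T : ℕ}

/-- Expansion of `⟨X-Y, X-Y⟩`. -/
lemma frobInner_sub_sub (X Y : Mat d T) :
    frobInner (X - Y) (X - Y) = frobInner X X - 2 * frobInner X Y + frobInner Y Y := by
  rw [frobInner_sub_left, frobInner_sub_right, frobInner_sub_right, frobInner_comm Y X]
  ring

/-- good direction property coming from membership in `VSet L`. -/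
lemma gooddir {L V : Mat d T} (hV : V ∈ VSet L) :
    ∀ Q : Mat d T, memO Q → frobInner L ((L + V) * Q) ≤ frobInner L (L + V) := by
  obtain ⟨M, P, hM, hP, hVeq⟩ := hV
  have hLV : L + V = M * P := by rw [hVeq]; abel
  intro Q hQ
  have h1 : frobNorm (L - M * P) ≤ frobNorm (L - M * P * Q) := by
    rw [hP.2, Matrix.mul_assoc]
    exact dABW_le (memO_mul hP.1 hQ)
  have h2 : frobNorm (L - M * P) ^ 2 ≤ frobNorm (L - M * P * Q) ^ 2 :=
    pow_le_pow_left₀ (frobNorm_nonneg _) h1 2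
  rw [frobNorm_sq, frobNorm_sq, frobInner_sub_sub, frobInner_sub_sub] at h2
  have h3 : frobInner (M * P * Q) (M * P * Q) = frobInner (M * P) (M * P) :=
    frobInner_mul_orth hQ.2
  rw [hLV]
  linarith
  
/-- `⟨L, LQ⟩ = ⟨L,L⟩ - h(Q)/2` for `Q` orthogonal-block. -/
lemma inner_L_LQ {L Q : Mat d T} (hQ : memO Q) :
    frobInner L (L * Q) = frobInner L L - frobInner (L * Q - L) (L * Q - L) / 2 := by
  have h1 : frobInner (L * Q - L) (L * Q - L)
      = frobInner (L * Q) (L * Q) - 2 * frobInner (L * Q) L + frobInner L L :=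
    frobInner_sub_sub _ _
  have h2 : frobInner (L * Q) (L * Q) = frobInner L L := frobInner_mul_orth hQ.2
  have h3 : frobInner (L * Q) L = frobInner L (L * Q) := frobInner_comm _ _
  linarith

/-- Central inequality: for a good direction `X`, `⟨X, LQ - L⟩ ≤ h(Q)/2`. -/
lemma cent {L X : Mat d T}
    (hgood : ∀ Q : Mat d T, memO Q → frobInner L ((L + X) * Q) ≤ frobInner L (L + X))
    {Q : Mat d T} (hQ : memO Q) :
    frobInner X (L * Q - L) ≤ frobInner (L * Q - L) (L * Q - L) / 2 := by
  have h2 : frobInner (L + X) (L * Q) ≤ frobInner (L + X) L := by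
    have h := hgood Qᵀ (memO_transpose hQ)
    rw [frobInner_mul_swap, Matrix.transpose_transpose, frobInner_comm L (L + X)] at h
    exact h
  have h3 := inner_L_LQ (L := L) hQ
  have e1 : frobInner X (L * Q - L)
      = frobInner (L + X) (L * Q) - frobInner (L + X) L
        - (frobInner L (L * Q) - frobInner L L) := by
    simp only [frobInner_sub_right, frobInner_add_left]
    ring
  linarith [frobInner_self_nonneg (L * Q - L)]

/-- transposed h equals h. -/
lemma hfun_transpose {L Q : Mat d T} (hQ : memO Q) :
    frobInner (L * Qᵀ - L) (L * Qᵀ - L) = frobInner (L * Q - L) (L * Q - L) := by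
  have h1 : (L * Qᵀ - L) * Q = L - L * Q := by
    rw [Matrix.sub_mul, Matrix.mul_assoc, hQ.2, Matrix.mul_one]
  calc frobInner (L * Qᵀ - L) (L * Qᵀ - L)
      = frobInner ((L * Qᵀ - L) * Q) ((L * Qᵀ - L) * Q) := (frobInner_mul_orth hQ.2).symm
    _ = frobInner (L - L * Q) (L - L * Q) := by rw [h1]
    _ = frobInner (L * Q - L) (L * Q - L) := by
        simp only [frobInner, Matrix.sub_apply]
        exact Finset.sum_congr rfl fun i _ => Finset.sum_congr rfl fun j _ => by ring

/-- Expansion of the mixed inner product. -/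
lemma inner_mul_expand (L V W O : Mat d T) (u : ℝ) :
    frobInner (L + u • V) ((L + u • W) * O)
      = frobInner L (L * O) + u * frobInner V (L * O) + u * frobInner L (W * O)
        + u ^ 2 * frobInner V (W * O) := by
  have : (L + u • W) * O = L * O + u • (W * O) := by
    rw [Matrix.add_mul, Matrix.smul_mul]
  rw [this]
  simp only [frobInner_add_left, frobInner_add_right, frobInner_smul_left, frobInner_smul_right]
  ring

/-- Expansion of `⟨L+uV, L+uV⟩`. -/
lemma inner_self_expand (L V : Mat d T) (u : ℝ) :
    frobInner (L + u • V) (L + u • V)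
      = frobInner L L + 2 * u * frobInner L V + u ^ 2 * frobInner V V := by
  simp only [frobInner_add_left, frobInner_add_right, frobInner_smul_left, frobInner_smul_right]
  rw [frobInner_comm V L]
  ring

end Aux4

section Aux5
variable {d T : ℕ}

/-- Lower bound on the numerator, valid at any optimizer of the limit problem. -/
lemma lower_bound {L V W Os : Mat d T} (hO : memO Os) (hLO : L * Os = L) (u : ℝ) :
    2 * u ^ 2 * frobInner V (W * Os)
      ≤ u ^ 2 * frobNorm V ^ 2 + u ^ 2 * frobNorm W ^ 2
        - dABW (L + u • V) (L + u • W) ^ 2 := by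
  have hLOT : L * Osᵀ = L := by
    calc L * Osᵀ = (L * Os) * Osᵀ := by rw [hLO]
      _ = L * (Os * Osᵀ) := Matrix.mul_assoc _ _ _
      _ = L := by rw [mul_eq_one_comm.mp hO.2, Matrix.mul_one]
  have hd : dABW (L + u • V) (L + u • W) ≤ frobNorm (L + u • V - (L + u • W) * Os) :=
    dABW_le hO
  have hd2 : dABW (L + u • V) (L + u • W) ^ 2
      ≤ frobNorm (L + u • V - (L + u • W) * Os) ^ 2 :=
    pow_le_pow_left₀ (dABW_nonneg _ _) hd 2
  rw [frobNorm_sq, frobInner_sub_sub] at hd2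
  have e1 := inner_mul_expand L V W Os u
  rw [hLO] at e1
  have e2 : frobInner L (W * Os) = frobInner L W := by
    rw [frobInner_mul_swap, hLOT, frobInner_comm]
  rw [e2] at e1
  have e3 : frobInner ((L + u • W) * Os) ((L + u • W) * Os)
      = frobInner (L + u • W) (L + u • W) := frobInner_mul_orth hO.2
  have eA := inner_self_expand L V u
  have eB := inner_self_expand L W u
  rw [frobNorm_sq V, frobNorm_sq W]
  have cVL : frobInner V L = frobInner L V := frobInner_comm _ _
  rw [cVL] at e1
  linarith

/-- Upper bound on the numerator via the optimizer of `dABW (L+uV) (L+uW)`. -/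
lemma upper_bound {L V W : Mat d T}
    (hgV : ∀ Q : Mat d T, memO Q → frobInner L ((L + V) * Q) ≤ frobInner L (L + V))
    (hgW : ∀ Q : Mat d T, memO Q → frobInner L ((L + W) * Q) ≤ frobInner L (L + W))
    (u : ℝ) (hu : 0 < u) :
    ∃ O : Mat d T, memO O ∧
      u ^ 2 * frobNorm V ^ 2 + u ^ 2 * frobNorm W ^ 2
          - dABW (L + u • V) (L + u • W) ^ 2
        ≤ 2 * ((u - 1 / 2) * frobInner (L * O - L) (L * O - L)
            + u ^ 2 * frobInner V (W * O)) := by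
  obtain ⟨O₀, hO₀mem, hmin⟩ := isCompact_setO.exists_isMinOn ⟨1, memO_one⟩
    (cont_dist (L + u • V) (L + u • W)).continuousOn
  have hO₀ : memO O₀ := hO₀mem
  refine ⟨O₀, hO₀, ?_⟩
  have hdval : dABW (L + u • V) (L + u • W) = frobNorm (L + u • V - (L + u • W) * O₀) := by
    refine le_antisymm (dABW_le hO₀) (le_csInf ⟨_, 1, memO_one, rfl⟩ ?_)
    rintro r ⟨Q, hQ, rfl⟩
    exact isMinOn_iff.mp hmin Q hQ
  have e0 : dABW (L + u • V) (L + u • W) ^ 2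
      = frobInner (L + u • V) (L + u • V)
        - 2 * frobInner (L + u • V) ((L + u • W) * O₀)
        + frobInner ((L + u • W) * O₀) ((L + u • W) * O₀) := by
    rw [hdval, frobNorm_sq, frobInner_sub_sub]
  have c4 : frobInner ((L + u • W) * O₀) ((L + u • W) * O₀)
      = frobInner (L + u • W) (L + u • W) := frobInner_mul_orth hO₀.2
  have c1 := inner_L_LQ (L := L) hO₀
  have c2 := cent hgV hO₀
  rw [frobInner_sub_right] at c2
  have c3 := cent hgW (memO_transpose hO₀)
  rw [frobInner_sub_right, hfun_transpose hO₀] at c3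
  have hswap : frobInner L (W * O₀) = frobInner W (L * O₀ᵀ) := frobInner_mul_swap _ _ _
  have m2 : u * (frobInner V (L * O₀) - frobInner V L)
      ≤ u * (frobInner (L * O₀ - L) (L * O₀ - L) / 2) :=
    mul_le_mul_of_nonneg_left (by linarith) hu.le
  have m3 : u * (frobInner W (L * O₀ᵀ) - frobInner W L)
      ≤ u * (frobInner (L * O₀ - L) (L * O₀ - L) / 2) :=
    mul_le_mul_of_nonneg_left (by linarith) hu.le
  have e1 := inner_mul_expand L V W O₀ u
  rw [hswap] at e1
  have eA := inner_self_expand L V u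
  have eB := inner_self_expand L W u
  have cVL : frobInner V L = frobInner L V := frobInner_comm _ _
  have cWL : frobInner W L = frobInner L W := frobInner_comm _ _
  rw [cVL] at m2
  rw [cWL] at m3
  rw [frobNorm_sq V, frobNorm_sq W]
  linarith

end Aux5

section Aux6
variable {d T : ℕ}

lemma eps_lemma {L V W : Mat d T} (S : ℝ)
    (hS : ∀ O : Mat d T, memO O → L * O = L → frobInner V (W * O) ≤ S)
    {δ : ℝ} (hδ : 0 < δ) :
    ∃ ε > (0:ℝ), ∀ O : Mat d T, memO O →
      frobInner (L * O - L) (L * O - L) ≤ ε → frobInner V (W * O) ≤ S + δ := by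
  by_cases hKne : ({O : Mat d T | memO O ∧ S + δ ≤ frobInner V (W * O)}).Nonempty
  · have hKcl : IsClosed {O : Mat d T | memO O ∧ S + δ ≤ frobInner V (W * O)} :=
      IsClosed.inter isClosed_setO (isClosed_le continuous_const (cont_frobInner_right V W))
    have hKcomp : IsCompact {O : Mat d T | memO O ∧ S + δ ≤ frobInner V (W * O)} :=
      IsCompact.of_isClosed_subset isCompact_setO hKcl (fun O hO => hO.1)
    obtain ⟨O₁, hO₁K, hmin⟩ := hKcomp.exists_isMinOn hKne (cont_hfun L).continuousOn
    have hnn : 0 ≤ frobInner (L * O₁ - L) (L * O₁ - L) := frobInner_self_nonneg _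
    have hpos : 0 < frobInner (L * O₁ - L) (L * O₁ - L) := by
      rcases hnn.lt_or_eq with h | h
      · exact h
      · exfalso
        have hz : L * O₁ - L = 0 := frobInner_self_eq_zero h.symm
        have hLO : L * O₁ = L := by rwa [sub_eq_zero] at hz
        have := hS O₁ hO₁K.1 hLO
        have := hO₁K.2
        linarith
    refine ⟨frobInner (L * O₁ - L) (L * O₁ - L) / 2, by positivity, ?_⟩
    intro O hO hle
    by_contra hgt
    push_neg at hgt
    have hOK : O ∈ {O : Mat d T | memO O ∧ S + δ ≤ frobInner V (W * O)} := ⟨hO, hgt.le⟩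
    have := isMinOn_iff.mp hmin O hOK
    linarith
  · refine ⟨1, one_pos, fun O hO _ => ?_⟩
    by_contra h
    push_neg at h
    exact hKne ⟨O, hO, h.le⟩

end Aux6


/-- the cosine of the Alexandrov angle between the geodesics `u ↦ [L + uV]`
and `u ↦ [L + uW]` emanating from `[L]` equals
`sup_{O ∈ 𝐎*(L,L)} ⟨V, WO⟩_F / (‖V‖_F ‖W‖_F)`. -/
theorem stmt16 (d T : ℕ) (hd : 0 < d) (hT : 0 < T) (L V W : Mat d T)
    (hL : memL L) (hV : V ∈ VSet L) (hW : W ∈ VSet L) (hV0 : V ≠ 0) (hW0 : W ≠ 0) :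
    Filter.Tendsto
      (fun u : ℝ =>
        (u ^ 2 * frobNorm V ^ 2 + u ^ 2 * frobNorm W ^ 2
            - dABW (L + u • V) (L + u • W) ^ 2) /
          (2 * u ^ 2 * frobNorm V * frobNorm W))
      (nhdsWithin 0 (Set.Ioi (0 : ℝ)))
      (nhds (sSup {r : ℝ | ∃ O ∈ OStar L L, r = frobInner V (W * O)} /
        (frobNorm V * frobNorm W))) := by
  classical
  have hfV : 0 < frobNorm V :=
    lt_of_le_of_ne (frobNorm_nonneg V) (fun h => hV0 (frobNorm_eq_zero h.symm))
  have hfW : 0 < frobNorm W :=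
    lt_of_le_of_ne (frobNorm_nonneg W) (fun h => hW0 (frobNorm_eq_zero h.symm))
  set S := sSup {r : ℝ | ∃ O ∈ OStar L L, r = frobInner V (W * O)} with hSdef
  -- compactness of OStar L L and the maximizer
  have hcl : IsClosed (OStar L L) := by
    have : OStar L L = {O : Mat d T | memO O} ∩ {O : Mat d T | L * O = L} := by
      ext O
      simp only [Set.mem_inter_iff, Set.mem_setOf_eq]
      exact mem_OStar_self
    rw [this]
    exact isClosed_setO.inter
      (isClosed_eq (continuous_const.matrix_mul continuous_id) continuous_const)
  have hcomp : IsCompact (OStar L L) :=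
    IsCompact.of_isClosed_subset isCompact_setO hcl (fun O hO => hO.1)
  have hne : (OStar L L).Nonempty := ⟨1, mem_OStar_self.mpr ⟨memO_one, by simp⟩⟩
  obtain ⟨Om, hOm, hmax⟩ := hcomp.exists_isMaxOn hne (cont_frobInner_right V W).continuousOn
  have hSval : S = frobInner V (W * Om) := by
    rw [hSdef]
    apply IsGreatest.csSup_eq
    constructor
    · exact ⟨Om, hOm, rfl⟩
    · rintro r ⟨O, hO, rfl⟩
      exact isMaxOn_iff.mp hmax O hO
  obtain ⟨hOmMem, hOmL⟩ := mem_OStar_self.mp hOm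
  have hSub : ∀ O : Mat d T, memO O → L * O = L → frobInner V (W * O) ≤ S := by
    intro O h1 h2
    rw [hSval]
    exact isMaxOn_iff.mp hmax O (mem_OStar_self.mpr ⟨h1, h2⟩)
  have hgV := gooddir hV
  have hgW := gooddir hW
  -- global bound for the inner products
  obtain ⟨OB, hOBmem, hmaxB⟩ := isCompact_setO.exists_isMaxOn ⟨1, memO_one⟩
    (cont_frobInner_right V W).continuousOn
  have hB : ∀ O : Mat d T, memO O → frobInner V (W * O) ≤ frobInner V (W * OB) :=
    fun O hO => isMaxOn_iff.mp hmaxB O hO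
  set B := frobInner V (W * OB) with hBdef
  -- main limit
  have H : Tendsto
      (fun u : ℝ => (u ^ 2 * frobNorm V ^ 2 + u ^ 2 * frobNorm W ^ 2
          - dABW (L + u • V) (L + u • W) ^ 2) / (2 * u ^ 2))
      (nhdsWithin 0 (Set.Ioi (0 : ℝ))) (nhds S) := by
    rw [tendsto_order]
    constructor
    · intro a ha
      filter_upwards [self_mem_nhdsWithin] with u hu
      have hu0 : 0 < u := hu
      have h2u : 0 < 2 * u ^ 2 := by positivity
      have hlow := lower_bound hOmMem hOmL u (V := V) (W := W)
      rw [← hSval] at hlow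
      rw [lt_div_iff₀ h2u]
      have := mul_lt_mul_of_pos_right ha h2u
      linarith
    · intro a ha
      have hδ : 0 < (a - S) / 2 := by linarith
      obtain ⟨ε, hε, heps⟩ := eps_lemma S hSub hδ
      set M := |B| + |S| + 1 with hM
      have hMpos : 0 < M := by positivity
      set η := min (1 / 4 : ℝ) (Real.sqrt (ε / (4 * M))) with hη
      have hηpos : 0 < η := lt_min (by norm_num) (Real.sqrt_pos.mpr (by positivity))
      filter_upwards [Ioo_mem_nhdsGT_of_mem (Set.mem_Ico.mpr ⟨le_refl (0:ℝ), hηpos⟩)] with u hu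
      obtain ⟨hu0, huη⟩ := hu
      obtain ⟨O, hO, hub⟩ := upper_bound hgV hgW u hu0
      have h2u : 0 < 2 * u ^ 2 := by positivity
      have hu2 : 0 < u ^ 2 := by positivity
      rw [div_lt_iff₀ h2u]
      refine lt_of_le_of_lt hub ?_
      clear_value S B M
      have hu4 : u ≤ 1 / 4 := le_of_lt (lt_of_lt_of_le huη (min_le_left _ _))
      have hOnn : 0 ≤ frobInner (L * O - L) (L * O - L) := frobInner_self_nonneg _
      by_cases hcase : frobInner (L * O - L) (L * O - L) ≤ ε
      · have hg := heps O hO hcase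
        have h1 : (u - 1 / 2) * frobInner (L * O - L) (L * O - L) ≤ 0 :=
          mul_nonpos_of_nonpos_of_nonneg (by linarith) hOnn
        have e1 : u ^ 2 * frobInner V (W * O) ≤ u ^ 2 * (S + (a - S) / 2) :=
          mul_le_mul_of_nonneg_left hg hu2.le
        have e2 : u ^ 2 * (S + (a - S) / 2) < u ^ 2 * a :=
          mul_lt_mul_of_pos_left (by linarith) hu2
        linarith
      · push_neg at hcase
        have hgB := hB O hO
        have huu : u ^ 2 ≤ ε / (4 * M) := by
          have h' : u ≤ Real.sqrt (ε / (4 * M)) := le_of_lt (lt_of_lt_of_le huη (min_le_right _ _))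
          calc u ^ 2 ≤ Real.sqrt (ε / (4 * M)) ^ 2 := pow_le_pow_left₀ hu0.le h' 2
            _ = ε / (4 * M) := Real.sq_sqrt (by positivity)
        have h4 : M * u ^ 2 ≤ ε / 4 := by
          have h'' := mul_le_mul_of_nonneg_left huu hMpos.le
          have heq : M * (ε / (4 * M)) = ε / 4 := by
            field_simp
          linarith
        have h5 : (u - 1 / 2) * frobInner (L * O - L) (L * O - L)
            ≤ -(1 / 4) * frobInner (L * O - L) (L * O - L) :=
          mul_le_mul_of_nonneg_right (by linarith) hOnn
        have h6 : -(1 / 4 : ℝ) * frobInner (L * O - L) (L * O - L) ≤ -(1 / 4) * ε := by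
          linarith
        have h7 : u ^ 2 * frobInner V (W * O) ≤ u ^ 2 * B :=
          mul_le_mul_of_nonneg_left hgB hu2.le
        have h8 : B - M ≤ S - 1 := by
          have hb1 := le_abs_self B
          have hb2 := neg_abs_le S
          rw [hM]
          linarith
        have h9 : u ^ 2 * (B - M) ≤ u ^ 2 * (S - 1) := mul_le_mul_of_nonneg_left h8 hu2.le
        have h10 : u ^ 2 * (S - 1) < u ^ 2 * a := mul_lt_mul_of_pos_left (by linarith) hu2
        linarith
  have Hdiv := H.div_const (frobNorm V * frobNorm W)
  refine Tendsto.congr (fun u => ?_) Hdiv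
  rw [div_div]
  congr 1
  ring
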